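/- Let W = ((s₁ t₁),…,(s_r t_r)) be a tuple of transpositions of S(d) whose spectrum is weakly increasing, with colour multiplicities m₂,…,m_d. Then the orbit of W under the sorting action of S(r) has size exactly r!/(m₂! m₃! ⋯ m_d!), the multinomial coefficient. -/

import Mathlib

/-- A transposition step `(s t)` of `S(d)` recorded with `s < t`; its colour is `t`. -/
def Step (d : ℕ) : Type := {p : Fin d × Fin d // p.1 < p.2}

/-- The permutation (transposition) corresponding to a step. -/
def stepPerm {d : ℕ} (x : Step d) : Equiv.Perm (Fin d) := Equiv.swap x.1.1 x.1.2

/-- The colour of a step, i.e. the larger of the two interchanged points. -/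
def colour {d : ℕ} (x : Step d) : Fin d := x.1.2

/-- The product of a tuple of steps, taken in order. -/
def stepProd {d r : ℕ} (W : Fin r → Step d) : Equiv.Perm (Fin d) :=
  (List.ofFn fun j => stepPerm (W j)).prod

/-- Conjugation of the step `x` by the step `c`, recorded again as a step. -/
def conjStep {d : ℕ} (c x : Step d) : Step d :=
  if h : stepPerm c x.1.1 < stepPerm c x.1.2 then
    ⟨(stepPerm c x.1.1, stepPerm c x.1.2), h⟩
  else
    ⟨(stepPerm c x.1.2, stepPerm c x.1.1),
      lt_of_le_of_ne (not_lt.mp h)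
        (fun he => absurd ((stepPerm c).injective he) (ne_of_gt x.2))⟩

/-- The sorting operator `R_i`: swap steps `i` and `i+1`, conjugating the step of
larger colour by the step of smaller colour; do nothing if the colours agree. -/
def Rop {d r : ℕ} (i : ℕ) (h : i + 1 < r) (W : Fin r → Step d) : Fin r → Step d :=
  let i0 : Fin r := ⟨i, Nat.lt_of_succ_lt h⟩
  let i1 : Fin r := ⟨i + 1, h⟩
  let a := W i0
  let b := W i1
  if colour a < colour b then
    Function.update (Function.update W i0 (conjStep a b)) i1 a
  else if colour b < colour a then
    Function.update (Function.update W i0 b) i1 (conjStep b a)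
  else W

/-- The set of `r`-step walks on the transposition Cayley graph of `S(d)` from
`ρ` to `σ`, encoded as tuples of steps with `ρ * (product of steps) = σ`. -/
def Walk (d r : ℕ) (ρ σ : Equiv.Perm (Fin d)) : Type :=
  {W : Fin r → Step d // ρ * stepProd W = σ}

/-- The spectrum of a walk: the sequence of colours of its steps. -/
def spec {d r : ℕ} {ρ σ : Equiv.Perm (Fin d)} (W : Walk d r ρ σ) : Fin r → Fin d :=
  fun j => colour (W.val j)

/-- The generator condition characterizing the sorting action: the homomorphism
`R : S(r) → Aut(Walk_r(ρ,σ))` sends each Coxeter generator `(i i+1)` to `R_i`. -/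
def IsSortingAction {d r : ℕ} {ρ σ : Equiv.Perm (Fin d)}
    (R : Equiv.Perm (Fin r) →* Equiv.Perm (Walk d r ρ σ)) : Prop :=
  ∀ (i : ℕ) (h : i + 1 < r) (W : Walk d r ρ σ),
    (R (Equiv.swap (⟨i, Nat.lt_of_succ_lt h⟩ : Fin r) (⟨i + 1, h⟩ : Fin r)) W).val
      = Rop i h W.val



section AuxGen
variable {r : ℕ} {α : Type*} [LinearOrder α]

/-- Adjacent swaps `(i, i+1)` whose `f`-colours agree. -/
def adjSet (f : Fin r → α) : Set (Equiv.Perm (Fin r)) :=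
  {g | ∃ i, ∃ h : i + 1 < r, f ⟨i, Nat.lt_of_succ_lt h⟩ = f ⟨i + 1, h⟩ ∧
    g = Equiv.swap ⟨i, Nat.lt_of_succ_lt h⟩ ⟨i + 1, h⟩}

lemma swap_mem_adjSet_closure (f : Fin r → α) (hf : Monotone f) :
    ∀ n (a b : Fin r), b.val - a.val = n → a < b → f a = f b →
      Equiv.swap a b ∈ Subgroup.closure (adjSet f) := by
  intro n
  induction n using Nat.strong_induction_on with
  | _ n ih =>
    intro a b hn hab hfab
    have hab' : a.val < b.val := hab
    rcases eq_or_lt_of_le (Nat.succ_le_of_lt hab') with heq | hlt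
    · apply Subgroup.subset_closure
      have hr : a.val + 1 < r := by have := b.isLt; omega
      have e1 : (⟨a.val, Nat.lt_of_succ_lt hr⟩ : Fin r) = a := Fin.ext rfl
      have e2 : (⟨a.val + 1, hr⟩ : Fin r) = b := Fin.ext heq
      exact ⟨a.val, hr, by rw [e1, e2]; exact hfab, by rw [e1, e2]⟩
    · set a' : Fin r := ⟨a.val + 1, lt_trans hlt b.isLt⟩ with ha'
      have haa' : a < a' := by
        simp only [Fin.lt_def, ha']; omega
      have ha'b : a' < b := by
        simp only [Fin.lt_def, ha']; exact hlt
      have hfa' : f a = f a' :=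
        le_antisymm (hf (le_of_lt haa')) (by rw [hfab]; exact hf (le_of_lt ha'b))
      have h1 : Equiv.swap a a' ∈ Subgroup.closure (adjSet f) := by
        apply Subgroup.subset_closure
        have e1 : (⟨a.val, Nat.lt_of_succ_lt a'.isLt⟩ : Fin r) = a := Fin.ext rfl
        have e2 : (⟨a.val + 1, a'.isLt⟩ : Fin r) = a' := Fin.ext rfl
        exact ⟨a.val, a'.isLt, by rw [e1, e2]; exact hfa', by rw [e1, e2]⟩
      have h2 : Equiv.swap a' b ∈ Subgroup.closure (adjSet f) :=
        ih (b.val - a'.val) (by simp only [ha']; omega) a' b rfl ha'b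
          (hfa' ▸ hfab)
      have key : Equiv.swap a b = Equiv.swap a a' * Equiv.swap a' b * (Equiv.swap a a')⁻¹ := by
        rw [← Equiv.swap_apply_apply]
        congr 1
        · exact (Equiv.swap_apply_right a a').symm
        · exact (Equiv.swap_apply_of_ne_of_ne (ne_of_gt hab) (ne_of_gt ha'b)).symm
      rw [key]
      exact mul_mem (mul_mem h1 h2) (inv_mem h1)

lemma mem_adjSet_closure_aux (f : Fin r → α) (hf : Monotone f) :
    ∀ n (π : Equiv.Perm (Fin r)),
      (Finset.univ.filter fun j => π j ≠ j).card = n →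
      (∀ j, f (π j) = f j) → π ∈ Subgroup.closure (adjSet f) := by
  intro n
  induction n using Nat.strong_induction_on with
  | _ n ih =>
    intro π hn hπ
    rcases Nat.eq_zero_or_pos n with h0 | hpos
    · have hemp : (Finset.univ.filter fun j => π j ≠ j) = ∅ :=
        Finset.card_eq_zero.mp (hn.trans h0)
      have hone : π = 1 := by
        apply Equiv.ext
        intro j
        simp only [Equiv.Perm.one_apply]
        by_contra hj
        have hmem : j ∈ Finset.univ.filter fun j => π j ≠ j :=
          Finset.mem_filter.mpr ⟨Finset.mem_univ _, hj⟩
        rw [hemp] at hmem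
        exact Finset.notMem_empty _ hmem
      rw [hone]; exact one_mem _
    · obtain ⟨a, ha⟩ : ∃ a, π a ≠ a := by
        by_contra h
        push_neg at h
        have : (Finset.univ.filter fun j => π j ≠ j) = ∅ := by
          apply Finset.filter_eq_empty_iff.mpr
          intro j _
          simp [h j]
        rw [this] at hn
        simp at hn
        omega
      set b := π a with hb
      have hfab : f b = f a := hπ a
      have hne : a ≠ b := fun h => ha h.symm
      have hswap : Equiv.swap a b ∈ Subgroup.closure (adjSet f) := by
        rcases lt_or_gt_of_ne hne with h | h
        · exact swap_mem_adjSet_closure f hf _ a b rfl h hfab.symm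
        · rw [Equiv.swap_comm]
          exact swap_mem_adjSet_closure f hf _ b a rfl h hfab
      set π' := Equiv.swap a b * π with hπ'def
      have hπ'f : ∀ j, f (π' j) = f j := by
        intro j
        simp only [hπ'def, Equiv.Perm.mul_apply]
        rcases eq_or_ne (π j) a with h1 | h1
        · rw [h1, Equiv.swap_apply_left, hfab, ← h1]
          exact hπ j
        · rcases eq_or_ne (π j) b with h2 | h2
          · rw [h2, Equiv.swap_apply_right, ← hfab, ← h2, hπ j]
          · rw [Equiv.swap_apply_of_ne_of_ne h1 h2, hπ j]
      have hsubset : (Finset.univ.filter fun j => π' j ≠ j) ⊆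
          (Finset.univ.filter fun j => π j ≠ j).erase a := by
        intro j hj
        simp only [Finset.mem_filter, Finset.mem_univ, true_and] at hj
        rw [Finset.mem_erase]
        constructor
        · rintro rfl
          apply hj
          simp only [hπ'def, Equiv.Perm.mul_apply, ← hb, Equiv.swap_apply_right]
        · simp only [Finset.mem_filter, Finset.mem_univ, true_and]
          intro hjfix
          apply hj
          simp only [hπ'def, Equiv.Perm.mul_apply, hjfix]
          apply Equiv.swap_apply_of_ne_of_ne
          · rintro rfl; exact ha hjfix
          · rintro rfl; exact hne (π.injective (hb.symm.trans hjfix.symm))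
      have hamem : a ∈ Finset.univ.filter fun j => π j ≠ j := by
        simp only [Finset.mem_filter, Finset.mem_univ, true_and]; exact ha
      have hlt : (Finset.univ.filter fun j => π' j ≠ j).card < n := by
        calc (Finset.univ.filter fun j => π' j ≠ j).card
            ≤ ((Finset.univ.filter fun j => π j ≠ j).erase a).card :=
              Finset.card_le_card hsubset
          _ < (Finset.univ.filter fun j => π j ≠ j).card :=
              Finset.card_erase_lt_of_mem hamem
          _ = n := hn
      have hπ'mem : π' ∈ Subgroup.closure (adjSet f) := ih _ hlt π' rfl hπ'f
      have : π = Equiv.swap a b * π' := by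
        rw [hπ'def, ← mul_assoc, Equiv.swap_mul_self, one_mul]
      rw [this]
      exact mul_mem hswap hπ'mem

lemma mem_adjSet_closure (f : Fin r → α) (hf : Monotone f) (π : Equiv.Perm (Fin r))
    (hπ : ∀ j, f (π j) = f j) : π ∈ Subgroup.closure (adjSet f) :=
  mem_adjSet_closure_aux f hf _ π rfl hπ

end AuxGen

section ActionAux
variable {d r : ℕ}

lemma colour_conjStep {c x : Step d} (h : colour c < colour x) :
    colour (conjStep c x) = colour x := by
  have hcc : c.1.1 < c.1.2 := c.2
  have hxx : x.1.1 < x.1.2 := x.2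
  have hne1 : x.1.2 ≠ c.1.1 := ne_of_gt (lt_trans hcc h)
  have hne2 : x.1.2 ≠ c.1.2 := ne_of_gt h
  have hfix : stepPerm c x.1.2 = x.1.2 := Equiv.swap_apply_of_ne_of_ne hne1 hne2
  have hlt : stepPerm c x.1.1 < stepPerm c x.1.2 := by
    rw [hfix]
    unfold stepPerm
    rcases eq_or_ne x.1.1 c.1.1 with h1 | h1
    · rw [h1, Equiv.swap_apply_left]; exact h
    · rcases eq_or_ne x.1.1 c.1.2 with h2 | h2
      · rw [h2, Equiv.swap_apply_right]; exact lt_trans hcc h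
      · rw [Equiv.swap_apply_of_ne_of_ne h1 h2]; exact hxx
  rw [show conjStep c x = ⟨(stepPerm c x.1.1, stepPerm c x.1.2), hlt⟩ from dif_pos hlt]
  show stepPerm c x.1.2 = x.1.2
  exact hfix

lemma colour_Rop (i : ℕ) (h : i + 1 < r) (V : Fin r → Step d) (j : Fin r) :
    colour (Rop i h V j) =
      colour (V (Equiv.swap (⟨i, Nat.lt_of_succ_lt h⟩ : Fin r) (⟨i + 1, h⟩ : Fin r) j)) := by
  set i0 : Fin r := ⟨i, Nat.lt_of_succ_lt h⟩ with hi0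
  set i1 : Fin r := ⟨i + 1, h⟩ with hi1
  have hne : i0 ≠ i1 := by simp [hi0, hi1, Fin.ext_iff]
  unfold Rop
  simp only [← hi0, ← hi1]
  split_ifs with h1 h2
  · rcases eq_or_ne j i1 with rfl | hj1
    · rw [Function.update_self, Equiv.swap_apply_right]
    · rw [Function.update_of_ne hj1]
      rcases eq_or_ne j i0 with rfl | hj0
      · rw [Function.update_self, Equiv.swap_apply_left, colour_conjStep h1]
      · rw [Function.update_of_ne hj0, Equiv.swap_apply_of_ne_of_ne hj0 hj1]
  · rcases eq_or_ne j i1 with rfl | hj1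
    · rw [Function.update_self, Equiv.swap_apply_right, colour_conjStep h2]
    · rw [Function.update_of_ne hj1]
      rcases eq_or_ne j i0 with rfl | hj0
      · rw [Function.update_self, Equiv.swap_apply_left]
      · rw [Function.update_of_ne hj0, Equiv.swap_apply_of_ne_of_ne hj0 hj1]
  · have heq : colour (V i0) = colour (V i1) := le_antisymm (not_lt.mp h2) (not_lt.mp h1)
    rcases eq_or_ne j i1 with rfl | hj1
    · rw [Equiv.swap_apply_right, heq]
    · rcases eq_or_ne j i0 with rfl | hj0
      · rw [Equiv.swap_apply_left, heq]
      · rw [Equiv.swap_apply_of_ne_of_ne hj0 hj1]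

end ActionAux

section FiberCount
variable {r d : ℕ}

/-- The fiber-preserving permutations form a type equivalent to the product of the
permutation groups of the fibers. -/
noncomputable def fiberPermEquiv (f : Fin r → Fin d) :
    {π : Equiv.Perm (Fin r) // ∀ j, f (π j) = f j} ≃
      ∀ t : Fin d, Equiv.Perm {j : Fin r // f j = t} where
  toFun π t := π.1.subtypePerm (fun j => ⟨fun hj => (π.2 j).symm.trans hj,
    fun hj => (π.2 j).trans hj⟩)
  invFun g := ⟨(Equiv.sigmaFiberEquiv f).permCongr (Equiv.sigmaCongrRight g), by
    intro j
    show f ((Equiv.sigmaFiberEquiv f) ((Equiv.sigmaCongrRight g)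
      ((Equiv.sigmaFiberEquiv f).symm j))) = f j
    exact (g (f j) ⟨j, rfl⟩).2⟩
  left_inv π := by
    apply Subtype.ext
    apply Equiv.ext
    intro j
    rfl
  right_inv g := by
    funext t
    apply Equiv.ext
    intro x
    obtain ⟨x, hx⟩ := x
    subst hx
    rfl

lemma card_fiberPerm (f : Fin r → Fin d) :
    Nat.card {π : Equiv.Perm (Fin r) // ∀ j, f (π j) = f j}
      = ∏ t : Fin d, Nat.factorial (Finset.univ.filter fun j => f j = t).card := by
  rw [Nat.card_congr (fiberPermEquiv f), Nat.card_pi]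
  congr 1
  funext t
  rw [Nat.card_eq_fintype_card, Fintype.card_perm, Fintype.card_subtype]

end FiberCount

/-- For a walk `W` with weakly increasing spectrum and colour multiplicities
`m₂, …, m_d`, the orbit of `W` under the sorting action of `S(r)` has size
exactly the multinomial coefficient `r! / (m₂! ⋯ m_d!)`. -/
theorem stmt18 (d r : ℕ) (ρ σ : Equiv.Perm (Fin d))
    (R : Equiv.Perm (Fin r) →* Equiv.Perm (Walk d r ρ σ)) (hR : IsSortingAction R)
    (W : Walk d r ρ σ) (hmono : Monotone (spec W)) :
    Nat.card (Set.range fun π : Equiv.Perm (Fin r) => R π W) *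
        ∏ t : Fin d, Nat.factorial (Finset.univ.filter (fun j => spec W j = t)).card
      = Nat.factorial r := by
  classical
  -- Step 1: spec of R π V
  have hspecR : ∀ (π : Equiv.Perm (Fin r)) (V : Walk d r ρ σ) (j : Fin r),
      spec (R π V) j = spec V (π⁻¹ j) := by
    intro π
    have hπ : π ∈ Subgroup.closure (adjSet (fun _ : Fin r => (0 : ℕ))) :=
      mem_adjSet_closure _ monotone_const π (fun _ => rfl)
    refine Subgroup.closure_induction
      (p := fun g _ => ∀ (V : Walk d r ρ σ) (j : Fin r), spec (R g V) j = spec V (g⁻¹ j))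
      ?_ ?_ ?_ ?_ hπ
    · rintro g ⟨i, h, -, rfl⟩ V j
      have h0 := hR i h V
      have h1 : spec (R (Equiv.swap (⟨i, Nat.lt_of_succ_lt h⟩ : Fin r) (⟨i + 1, h⟩ : Fin r)) V) j
          = colour (Rop i h V.val j) := by
        unfold spec; rw [h0]
      rw [h1, colour_Rop, Equiv.swap_inv]
      rfl
    · intro V j
      rw [map_one]
      rfl
    · intro x y hx hy hxp hyp V j
      rw [map_mul]
      have : (R x * R y) V = R x (R y V) := rfl
      rw [this, hxp (R y V) j, hyp V (x⁻¹ j)]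
      rw [mul_inv_rev]
      rfl
    · intro x hx hxp V j
      have h1 := hxp (R x⁻¹ V) (x j)
      have h2 : R x (R x⁻¹ V) = V := by
        rw [show R x (R x⁻¹ V) = (R x * R x⁻¹) V from rfl, ← map_mul, mul_inv_cancel, map_one]
        rfl
      rw [h2] at h1
      rw [inv_inv]
      rw [h1, show x⁻¹ (x j) = j from Equiv.Perm.inv_eq_iff_eq.mpr rfl]
  -- Step 2: the closure of equal-colour adjacent swaps stabilizes W
  have hstab : ∀ π ∈ Subgroup.closure (adjSet (spec W)), R π W = W := by
    intro π hπ
    refine Subgroup.closure_induction (p := fun g _ => R g W = W) ?_ ?_ ?_ ?_ hπ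
    · rintro g ⟨i, h, hcol, rfl⟩
      have h0 := hR i h W
      have h1 : Rop i h W.val = W.val := by
        unfold Rop
        simp only
        rw [if_neg, if_neg]
        · rw [show colour (W.val ⟨i + 1, h⟩) = spec W ⟨i + 1, h⟩ from rfl, ← hcol]
          exact lt_irrefl _
        · rw [show colour (W.val ⟨i, Nat.lt_of_succ_lt h⟩) = spec W ⟨i, Nat.lt_of_succ_lt h⟩ from rfl,
            hcol]
          exact lt_irrefl _
      exact Subtype.ext (h0.trans h1)
    · show R 1 W = W
      rw [map_one]; rfl
    · intro x y hx hy hxp hyp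
      rw [map_mul, show (R x * R y) W = R x (R y W) from rfl, hyp, hxp]
    · intro x hx hxp
      conv_lhs => rw [← hxp]
      rw [show R x⁻¹ (R x W) = (R x⁻¹ * R x) W from rfl, ← map_mul, inv_mul_cancel, map_one]
      rfl
  -- Step 3: stabilizer = fiber-preserving permutations
  have hsetEq : ∀ π : Equiv.Perm (Fin r), R π W = W ↔ ∀ j, spec W (π j) = spec W j := by
    intro π
    constructor
    · intro h j
      have := hspecR π W (π j)
      rw [h, show π⁻¹ (π j) = j from Equiv.Perm.inv_eq_iff_eq.mpr rfl] at this
      exact this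
    · intro h
      exact hstab π (mem_adjSet_closure (spec W) hmono π h)
  -- Step 4: orbit-stabilizer
  letI : MulAction (Equiv.Perm (Fin r)) (Walk d r ρ σ) := MulAction.compHom _ R
  have horbit : (Set.range fun π : Equiv.Perm (Fin r) => R π W)
      = MulAction.orbit (Equiv.Perm (Fin r)) W := rfl
  have hOS : Nat.card (MulAction.orbit (Equiv.Perm (Fin r)) W) *
      Nat.card (MulAction.stabilizer (Equiv.Perm (Fin r)) W)
      = Nat.card (Equiv.Perm (Fin r)) := by
    rw [← Nat.card_prod]
    exact Nat.card_congr (MulAction.orbitProdStabilizerEquivGroup _ W)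
  have hstabcard : Nat.card (MulAction.stabilizer (Equiv.Perm (Fin r)) W)
      = ∏ t : Fin d, Nat.factorial (Finset.univ.filter (fun j => spec W j = t)).card := by
    rw [← card_fiberPerm (spec W)]
    apply Nat.card_congr
    apply Equiv.subtypeEquivRight
    intro π
    exact hsetEq π
  rw [horbit, ← hstabcard, hOS, Nat.card_eq_fintype_card, Fintype.card_perm, Fintype.card_fin]
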